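/- arXiv:1503.05303 — 2 statements merged into one kernel-verified Lean document; each statement's English description precedes it below -/
import Mathlib

section
/- Let (A,A⁻), (B,B⁻), (C,C⁻) be oriented rectangles and Ψ, Φ continuous maps. If Ψ stretches (A,A⁻) to (B,B⁻) along paths with crossing number M ≥ 1 and Φ stretches (B,B⁻) to (C,C⁻) along paths with crossing number N ≥ 1, then the composition Φ ∘ Ψ stretches (A,A⁻) to (C,C⁻) along paths with crossing number M·N. -/
open Set

noncomputable section

/-- `(R, R1 ∪ R2)` is an oriented rectangle: `R` is homeomorphic to `[0,1]²` and
`R1`, `R2` are disjoint compact arcs contained in the boundary of `R`. -/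
def IsOrientedRect (R R1 R2 : Set (ℝ × ℝ)) : Prop :=
  Nonempty (↥R ≃ₜ (↥(Set.Icc (0:ℝ) 1) × ↥(Set.Icc (0:ℝ) 1))) ∧
  Nonempty (↥R1 ≃ₜ ↥(Set.Icc (0:ℝ) 1)) ∧
  Nonempty (↥R2 ≃ₜ ↥(Set.Icc (0:ℝ) 1)) ∧
  R1 ⊆ frontier R ∧ R2 ⊆ frontier R ∧ Disjoint R1 R2

/-- `(H, Ψ)` stretches the oriented rectangle `(A, A1 ∪ A2)` to `(B, B1 ∪ B2)` along paths. -/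
def StretchesAlong (H : Set (ℝ × ℝ)) (Ψ : ℝ × ℝ → ℝ × ℝ)
    (A A1 A2 B B1 B2 : Set (ℝ × ℝ)) : Prop :=
  IsCompact H ∧ H ⊆ A ∧
  ∀ γ : ℝ → ℝ × ℝ, ContinuousOn γ (Set.Icc 0 1) →
    (∀ t ∈ Set.Icc (0:ℝ) 1, γ t ∈ A) →
    ((γ 0 ∈ A1 ∧ γ 1 ∈ A2) ∨ (γ 0 ∈ A2 ∧ γ 1 ∈ A1)) →
    ∃ t' t'' : ℝ, t' ≤ t'' ∧ t' ∈ Set.Icc (0:ℝ) 1 ∧ t'' ∈ Set.Icc (0:ℝ) 1 ∧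
      (∀ t ∈ Set.Icc t' t'', γ t ∈ H ∧ Ψ (γ t) ∈ B) ∧
      ((Ψ (γ t') ∈ B1 ∧ Ψ (γ t'') ∈ B2) ∨ (Ψ (γ t') ∈ B2 ∧ Ψ (γ t'') ∈ B1))

/-- `Ψ` stretches `(A, A1 ∪ A2)` to `(B, B1 ∪ B2)` along paths with crossing number `N`. -/
def StretchesN (Ψ : ℝ × ℝ → ℝ × ℝ) (A A1 A2 B B1 B2 : Set (ℝ × ℝ)) (N : ℕ) : Prop :=
  ∃ H : Fin N → Set (ℝ × ℝ),
    (∀ i j : Fin N, i ≠ j → Disjoint (H i) (H j)) ∧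
    ∀ i : Fin N, StretchesAlong (H i) Ψ A A1 A2 B B1 B2

theorem stmt_8
    (A A1 A2 B B1 B2 C C1 C2 : Set (ℝ × ℝ))
    (hA : IsOrientedRect A A1 A2) (hB : IsOrientedRect B B1 B2) (hC : IsOrientedRect C C1 C2)
    (Ψ Φ : ℝ × ℝ → ℝ × ℝ) (hΨ : Continuous Ψ) (hΦ : Continuous Φ)
    (M N : ℕ) (hM : 1 ≤ M) (hN : 1 ≤ N)
    (h1 : StretchesN Ψ A A1 A2 B B1 B2 M)
    (h2 : StretchesN Φ B B1 B2 C C1 C2 N) :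
    StretchesN (Φ ∘ Ψ) A A1 A2 C C1 C2 (M * N) := by
  obtain ⟨H, Hdisj, Hst⟩ := h1
  obtain ⟨K, Kdisj, Kst⟩ := h2
  obtain ⟨-, -, -, -, -, hB12⟩ := hB
  refine ⟨fun k => H (finProdFinEquiv.symm k).1 ∩ Ψ ⁻¹' K (finProdFinEquiv.symm k).2, ?_, ?_⟩
  · intro i j hij
    have hne : (finProdFinEquiv.symm i) ≠ (finProdFinEquiv.symm j) := by
      intro h; exact hij (finProdFinEquiv.symm.injective h)
    by_cases h1' : (finProdFinEquiv.symm i).1 = (finProdFinEquiv.symm j).1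
    · have h2' : (finProdFinEquiv.symm i).2 ≠ (finProdFinEquiv.symm j).2 := by
        intro h2''; exact hne (Prod.ext h1' h2'')
      exact Disjoint.mono inter_subset_right inter_subset_right
        ((Kdisj _ _ h2').preimage Ψ)
    · exact Disjoint.mono inter_subset_left inter_subset_left (Hdisj _ _ h1')
  · intro k
    set i := (finProdFinEquiv.symm k).1
    set j := (finProdFinEquiv.symm k).2
    obtain ⟨HiC, HiA, Hi⟩ := Hst i
    obtain ⟨KjC, KjB, Kj⟩ := Kst j
    refine ⟨HiC.inter_right (KjC.isClosed.preimage hΨ), inter_subset_left.trans HiA, ?_⟩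
    intro γ hγc hγA hγe
    obtain ⟨t', t'', htle, ht'm, ht''m, hmid, hend⟩ := Hi γ hγc hγA hγe
    have htlt : t' < t'' := by
      rcases lt_or_eq_of_le htle with h | h
      · exact h
      · exfalso
        subst h
        rcases hend with ⟨ha, hb⟩ | ⟨ha, hb⟩
        · exact hB12.ne_of_mem ha hb rfl
        · exact hB12.ne_of_mem hb ha rfl
    have hsub : Set.Icc t' t'' ⊆ Set.Icc (0:ℝ) 1 :=
      Set.Icc_subset_Icc ht'm.1 ht''m.2
    set ℓ : ℝ → ℝ := fun s => t' + s * (t'' - t') with hℓ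
    have hℓmem : ∀ s ∈ Set.Icc (0:ℝ) 1, ℓ s ∈ Set.Icc t' t'' := by
      intro s hs
      simp only [hℓ, Set.mem_Icc]
      constructor
      · nlinarith [hs.1, hs.2, htle]
      · nlinarith [hs.1, hs.2, htle]
    set δ : ℝ → ℝ × ℝ := fun s => Ψ (γ (ℓ s)) with hδ
    have hδc : ContinuousOn δ (Set.Icc 0 1) := by
      apply hΨ.comp_continuousOn
      apply hγc.comp (by fun_prop)
      intro s hs
      exact hsub (hℓmem s hs)
    have hδB : ∀ s ∈ Set.Icc (0:ℝ) 1, δ s ∈ B := fun s hs => (hmid _ (hℓmem s hs)).2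
    have hℓ0 : ℓ 0 = t' := by simp [hℓ]
    have hℓ1 : ℓ 1 = t'' := by simp [hℓ]
    have hδe : (δ 0 ∈ B1 ∧ δ 1 ∈ B2) ∨ (δ 0 ∈ B2 ∧ δ 1 ∈ B1) := by
      simp only [hδ, hℓ0, hℓ1]; exact hend
    obtain ⟨s', s'', hsle, hs'm, hs''m, hmid2, hend2⟩ := Kj δ hδc hδB hδe
    refine ⟨ℓ s', ℓ s'', ?_, hsub (hℓmem _ hs'm), hsub (hℓmem _ hs''m), ?_, ?_⟩
    · simp only [hℓ]; nlinarith
    · intro t ht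
      have hts : ∃ s, s ∈ Set.Icc s' s'' ∧ ℓ s = t := by
        refine ⟨(t - t') / (t'' - t'), ⟨?_, ?_⟩, ?_⟩
        · rw [le_div_iff₀ (by linarith)]
          have := ht.1; simp only [hℓ] at this; linarith
        · rw [div_le_iff₀ (by linarith)]
          have := ht.2; simp only [hℓ] at this; linarith
        · simp only [hℓ]
          rw [div_mul_eq_mul_div, mul_div_assoc, div_self (by linarith : t'' - t' ≠ 0)]
          ring
      obtain ⟨s, hsmem, hst⟩ := hts
      have hsIcc : s ∈ Set.Icc (0:ℝ) 1 := ⟨hs'm.1.trans hsmem.1, hsmem.2.trans hs''m.2⟩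
      have htIcc : t ∈ Set.Icc t' t'' := hst ▸ hℓmem s hsIcc
      have h3 := hmid2 s hsmem
      simp only [hδ, hst] at h3
      exact ⟨⟨(hmid t htIcc).1, h3.1⟩, h3.2⟩
    · simpa only [hδ, Function.comp] using hend2
end
end

section
/- Let 0 < a₋ ≤ a₊ < 1, let q: ℝ → ℝ be locally integrable with a₋ ≤ q(t) ≤ a₊ for almost every t ≤ t₀, and let ε > 0 be such that a₋ − ε > 0. If (x, y) is a solution of the system x′ = y, y′ = x(x−1)(x−q(t)) satisfying 0 < x(t) ≤ a₋ − ε and y(t) > 0 for every t ≤ t₀, then x(t) → 0 and y(t) → 0 as t → −∞. -/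
open MeasureTheory Filter Set

noncomputable section

/-- `(x, y)` is a solution of the system `x' = y`, `y' = x(x-1)(x-q(t))`:
`x` is `C¹` with derivative `y`, and `y` is locally absolutely continuous with
`y'(t) = x(t)(x(t)-1)(x(t)-q(t))` for a.e. `t` (encoded via the integral formulation,
anchored at `t₀`). -/
def IsSolQ (q : ℝ → ℝ) (t₀ : ℝ) (x y : ℝ → ℝ) : Prop :=
  (∀ t : ℝ, HasDerivAt x (y t) t) ∧
  (∀ t : ℝ, y t = y t₀ + ∫ s in t₀..t, x s * (x s - 1) * (x s - q s))

/-- If `(t₀ - t) * K ≤ C` for all `t ≤ t₀`, then `K ≤ 0`. -/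
lemma aux_nonpos (t₀ K C : ℝ) (h : ∀ t ≤ t₀, (t₀ - t) * K ≤ C) : K ≤ 0 := by
  by_contra hK
  push_neg at hK
  have ht : t₀ - (|C| + 1) / K ≤ t₀ := by
    have : 0 < (|C| + 1) / K := div_pos (by positivity) hK
    linarith
  have := h _ ht
  rw [sub_sub_cancel, div_mul_cancel₀ _ hK.ne'] at this
  have := le_abs_self C
  linarith

theorem stmt_10
    (am ap t₀ ε : ℝ) (ham : 0 < am) (hamap : am ≤ ap) (hap : ap < 1)
    (hε : 0 < ε) (hεam : 0 < am - ε)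
    (q : ℝ → ℝ) (hqInt : LocallyIntegrable q volume)
    (hq : ∀ᵐ t ∂volume, t ≤ t₀ → am ≤ q t ∧ q t ≤ ap)
    (x y : ℝ → ℝ) (hsol : IsSolQ q t₀ x y)
    (hx : ∀ t : ℝ, t ≤ t₀ → 0 < x t ∧ x t ≤ am - ε ∧ 0 < y t) :
    Tendsto x atBot (nhds 0) ∧ Tendsto y atBot (nhds 0) := by
  obtain ⟨hx', hy⟩ := hsol
  set f : ℝ → ℝ := fun s => x s * (x s - 1) * (x s - q s) with hfdef
  have hxc : Continuous x := by
    rw [continuous_iff_continuousAt]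
    exact fun t => (hx' t).continuousAt
  -- interval integrability of f
  have hfInt : ∀ a b : ℝ, IntervalIntegrable f volume a b := by
    intro a b
    have h1 : IntervalIntegrable (fun s => x s * (x s - 1) * x s) volume a b :=
      ((hxc.mul (hxc.sub continuous_const)).mul hxc).intervalIntegrable a b
    have h2 : IntervalIntegrable (fun s => x s * (x s - 1) * q s) volume a b := by
      have : IntegrableOn (fun s => (x s * (x s - 1)) * q s) (Set.uIcc a b) volume :=
        IntegrableOn.continuousOn_mul
          ((hxc.mul (hxc.sub continuous_const)).continuousOn)
          (hqInt.integrableOn_isCompact isCompact_uIcc) isCompact_uIcc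
      exact this.intervalIntegrable
    have h3 := h1.sub h2
    have : f = fun s => x s * (x s - 1) * x s - x s * (x s - 1) * q s := by
      funext s; simp only [hfdef]; ring
    rw [this]
    exact h3
  -- continuity of y
  have hyc : Continuous y := by
    have : Continuous fun t => y t₀ + ∫ s in t₀..t, f s :=
      continuous_const.add (intervalIntegral.continuous_primitive hfInt t₀)
    exact this.congr fun t => (hy t).symm
  -- y increments
  have hysub : ∀ s t : ℝ, y t - y s = ∫ r in s..t, f r := by
    intro s t
    have h := intervalIntegral.integral_interval_sub_left (hfInt t₀ t) (hfInt t₀ s)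
    rw [hy t, hy s]
    linarith [h]
  -- x increments (FTC)
  have hxsub : ∀ s t : ℝ, x t - x s = ∫ r in s..t, y r := by
    intro s t
    exact (intervalIntegral.integral_eq_sub_of_hasDerivAt (fun r _ => hx' r)
      (hyc.intervalIntegrable s t)).symm
  -- a.e. positivity of f before t₀
  have hfpos : ∀ᵐ s ∂volume, s ≤ t₀ → 0 < f s := by
    filter_upwards [hq] with s hs hst
    obtain ⟨h1, h2⟩ := hs hst
    obtain ⟨hx0, hx1, hy0⟩ := hx s hst
    have hq1 : 0 < q s - x s := by linarith
    have hq2 : 0 < 1 - x s := by linarith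
    have : 0 < x s * ((1 - x s) * (q s - x s)) := mul_pos hx0 (mul_pos hq2 hq1)
    simp only [hfdef]; nlinarith
  -- monotonicity of x and y on Iic t₀
  have hxmono : MonotoneOn x (Iic t₀) := by
    intro s hs t ht hst
    have := hxsub s t
    have hnn : 0 ≤ ∫ r in s..t, y r :=
      intervalIntegral.integral_nonneg hst fun u hu => (hx u (hu.2.trans ht)).2.2.le
    linarith
  have hymono : MonotoneOn y (Iic t₀) := by
    intro s hs t ht hst
    have h0 : (fun _ : ℝ => (0:ℝ)) ≤ᵐ[volume.restrict (Icc s t)] f := by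
      filter_upwards [ae_restrict_mem measurableSet_Icc, ae_restrict_of_ae hfpos]
        with r hr hrpos
      exact (hrpos (hr.2.trans ht)).le
    have hnn : (0:ℝ) ≤ ∫ r in s..t, f r := by
      have := intervalIntegral.integral_mono_ae_restrict hst
        (intervalIntegrable_const) (hfInt s t) h0
      simpa using this
    have := hysub s t
    linarith
  -- truncated functions
  set g : ℝ → ℝ := fun t => x (min t t₀) with hgdef
  set h : ℝ → ℝ := fun t => y (min t t₀) with hhdef
  have hgmono : Monotone g := fun s t hst =>
    hxmono (min_le_right s t₀) (min_le_right t t₀) (min_le_min hst le_rfl)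
  have hhmono : Monotone h := fun s t hst =>
    hymono (min_le_right s t₀) (min_le_right t t₀) (min_le_min hst le_rfl)
  have hgbdd : BddBelow (Set.range g) := by
    refine ⟨0, ?_⟩
    rintro _ ⟨t, rfl⟩
    exact (hx _ (min_le_right t t₀)).1.le
  have hhbdd : BddBelow (Set.range h) := by
    refine ⟨0, ?_⟩
    rintro _ ⟨t, rfl⟩
    exact (hx _ (min_le_right t t₀)).2.2.le
  set L : ℝ := ⨅ t, g t with hLdef
  set M : ℝ := ⨅ t, h t with hMdef
  have hgL : Tendsto g atBot (nhds L) := tendsto_atBot_ciInf hgmono hgbdd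
  have hhM : Tendsto h atBot (nhds M) := tendsto_atBot_ciInf hhmono hhbdd
  have hL0 : 0 ≤ L := le_ciInf fun t => (hx _ (min_le_right t t₀)).1.le
  have hM0 : 0 ≤ M := le_ciInf fun t => (hx _ (min_le_right t t₀)).2.2.le
  have hLle : ∀ s, s ≤ t₀ → L ≤ x s := by
    intro s hs
    have := ciInf_le hgbdd s
    simpa [hgdef, min_eq_left hs] using this
  have hMle : ∀ s, s ≤ t₀ → M ≤ y s := by
    intro s hs
    have := ciInf_le hhbdd s
    simpa [hhdef, min_eq_left hs] using this
  -- M ≤ 0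
  have hMne : M ≤ 0 := by
    apply aux_nonpos t₀ M (x t₀)
    intro t ht
    have hint : ∫ r in t..t₀, (M:ℝ) ≤ ∫ r in t..t₀, y r :=
      intervalIntegral.integral_mono_on ht intervalIntegrable_const
        (hyc.intervalIntegrable t t₀) fun u hu => hMle u hu.2
    rw [intervalIntegral.integral_const, smul_eq_mul] at hint
    have := hxsub t t₀
    have hxt : 0 < x t := (hx t ht).1
    linarith
  -- L ≤ 0
  have hc : 0 < (1 - (am - ε)) * ε := mul_pos (by linarith) hε
  have hLne : L ≤ 0 := by
    have key : L * ((1 - (am - ε)) * ε) ≤ 0 := by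
      apply aux_nonpos t₀ _ (y t₀)
      intro t ht
      have haux : ∀ᵐ s ∂volume, s ≤ t₀ → L * ((1 - (am - ε)) * ε) ≤ f s := by
        filter_upwards [hq] with s hs hst
        obtain ⟨h1, h2⟩ := hs hst
        obtain ⟨hx0, hx1, hy0⟩ := hx s hst
        have hLx := hLle s hst
        have step : L * ((1 - (am - ε)) * ε) ≤ x s * ((1 - x s) * (q s - x s)) := by
          apply mul_le_mul hLx _ (mul_nonneg (by linarith) hε.le) hx0.le
          apply mul_le_mul (by linarith) (by linarith) hε.le (by linarith)
        calc L * ((1 - (am - ε)) * ε) ≤ x s * ((1 - x s) * (q s - x s)) := step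
          _ = f s := by simp only [hfdef]; ring
      have h0 : (fun _ : ℝ => L * ((1 - (am - ε)) * ε)) ≤ᵐ[volume.restrict (Icc t t₀)] f := by
        filter_upwards [ae_restrict_mem measurableSet_Icc, ae_restrict_of_ae haux]
          with r hr hra
        exact hra hr.2
      have hint : ∫ r in t..t₀, L * ((1 - (am - ε)) * ε) ≤ ∫ r in t..t₀, f r :=
        intervalIntegral.integral_mono_ae_restrict ht intervalIntegrable_const
          (hfInt t t₀) h0
      rw [intervalIntegral.integral_const, smul_eq_mul] at hint
      have := hysub t t₀
      have hyt : 0 < y t := (hx t ht).2.2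
      linarith
    by_contra hL
    push_neg at hL
    nlinarith
  have hLz : L = 0 := le_antisymm hLne hL0
  have hMz : M = 0 := le_antisymm hMne hM0
  rw [hLz] at hgL
  rw [hMz] at hhM
  constructor
  · refine hgL.congr' ?_
    filter_upwards [eventually_le_atBot t₀] with t ht
    simp [hgdef, min_eq_left ht]
  · refine hhM.congr' ?_
    filter_upwards [eventually_le_atBot t₀] with t ht
    simp [hhdef, min_eq_left ht]
end
end
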